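/- Let μ be a probability measure on a set partitioned into N measurable cells C_1,...,C_N with μ(C_i) > 0. For i.i.d. queries q_1,...,q_t ~ μ, let n_i(t) be the number of queries landing in C_i. If for each i, conditionally on n_i(t) = n, a quantity satisfies E[μ(C_i \ Ĉ_{i,t}) | n_i(t) = n] ≤ (2/(n+1))·μ(C_i), then ∑_{t=1}^T ∑_{i=1}^N E[μ(C_i \ Ĉ_{i,t})] ≤ 2N·log(T+1). -/

import Mathlib

open MeasureTheory
open scoped ENNReal

open scoped Classical


lemma aux_cardF (T t : ℕ) (ht : t ≤ T + 1) :
    (Finset.univ.filter (fun s : Fin (T+1) => (s:ℕ) < t)).card = t := by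
  have : (Finset.univ.filter (fun s : Fin (T+1) => (s:ℕ) < t))
      = Finset.map ⟨fun k : Fin t => (⟨k, lt_of_lt_of_le k.2 ht⟩ : Fin (T+1)), by
          intro a b hab; simpa [Fin.ext_iff] using hab⟩ Finset.univ := by
    ext s
    simp only [Finset.mem_filter, Finset.mem_univ, true_and, Finset.mem_map,
      Function.Embedding.coeFn_mk]
    constructor
    · intro hs; exact ⟨⟨s, hs⟩, Fin.ext rfl⟩
    · rintro ⟨k, -, rfl⟩; exact k.2
  rw [this, Finset.card_map, Finset.card_univ, Fintype.card_fin]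

lemma aux_An_eq {E : Type*} (T t n : ℕ) (C : Set E) :
    {ω : Fin (T+1) → E | {s : Fin (T+1) | (s:ℕ) < t ∧ ω s ∈ C}.ncard = n}
    = ⋃ S ∈ (Finset.univ.filter (fun s : Fin (T+1) => (s:ℕ) < t)).powersetCard n,
        {ω | ∀ s ∈ Finset.univ.filter (fun s : Fin (T+1) => (s:ℕ) < t), (ω s ∈ C ↔ s ∈ S)} := by
  set F := Finset.univ.filter (fun s : Fin (T+1) => (s:ℕ) < t) with hF
  ext ω
  have hkey : {s : Fin (T+1) | (s:ℕ) < t ∧ ω s ∈ C} = ↑(F.filter (fun s => ω s ∈ C)) := by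
    ext s; simp [hF, and_comm]
  simp only [Set.mem_setOf_eq, hkey, Set.ncard_coe_finset, Set.mem_iUnion,
    Finset.mem_powersetCard]
  constructor
  · intro h
    refine ⟨F.filter (fun s => ω s ∈ C), ⟨Finset.filter_subset _ _, h⟩, ?_⟩
    intro s hs
    simp [Finset.mem_filter, hs]
  · rintro ⟨S, ⟨hSF, hcard⟩, hS⟩
    have : F.filter (fun s => ω s ∈ C) = S := by
      ext s
      simp only [Finset.mem_filter]
      constructor
      · rintro ⟨h1, h2⟩; exact (hS s h1).1 h2
      · intro h; exact ⟨hSF h, (hS s (hSF h)).2 h⟩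
    rw [this, hcard]

lemma aux_fiber_meas {E : Type*} [MeasurableSpace E] (T : ℕ) (C : Set E) (hC : MeasurableSet C)
    (F S : Finset (Fin (T+1))) :
    MeasurableSet {ω : Fin (T+1) → E | ∀ s ∈ F, (ω s ∈ C ↔ s ∈ S)} := by
  have : {ω : Fin (T+1) → E | ∀ s ∈ F, (ω s ∈ C ↔ s ∈ S)}
      = ⋂ s ∈ F, {ω : Fin (T+1) → E | ω s ∈ C ↔ s ∈ S} := by
    ext ω; simp
  rw [this]
  refine MeasurableSet.biInter (Set.to_countable _) (fun s _ => ?_)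
  by_cases hs : s ∈ S
  · simp only [hs, iff_true]
    exact measurable_pi_apply s hC
  · simp only [hs, iff_false]
    exact (measurable_pi_apply s hC).compl


lemma aux_fiber_measure {E : Type*} [MeasurableSpace E] (μ : Measure E) [IsProbabilityMeasure μ]
    (T : ℕ) (C : Set E) (hC : MeasurableSet C)
    (F S : Finset (Fin (T+1))) (hSF : S ⊆ F) :
    (Measure.pi fun _ : Fin (T + 1) => μ) {ω | ∀ s ∈ F, (ω s ∈ C ↔ s ∈ S)}
      = μ C ^ S.card * μ Cᶜ ^ (F.card - S.card) := by
  have hset : {ω : Fin (T+1) → E | ∀ s ∈ F, (ω s ∈ C ↔ s ∈ S)}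
      = Set.pi Set.univ (fun s => if s ∈ S then C else if s ∈ F then Cᶜ else Set.univ) := by
    ext ω
    simp only [Set.mem_setOf_eq, Set.mem_pi, Set.mem_univ, forall_true_left]
    constructor
    · intro h s
      by_cases hS : s ∈ S
      · simpa [hS] using (h s (hSF hS)).2 hS
      · by_cases hF : s ∈ F
        · simp only [hS, hF, if_false, if_true]
          exact fun hc => hS ((h s hF).1 hc)
        · simp [hS, hF]
    · intro h s hsF
      have hs := h s
      by_cases hS : s ∈ S
      · simp only [hS, if_true] at hs; simp [hS, hs]
      · simp only [hS, hsF, if_false, if_true] at hs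
        simp [hS]; exact hs
  rw [hset, Measure.pi_pi]
  have h1 : ∀ s ∈ Finset.univ \ F,
      μ ((fun s => if s ∈ S then C else if s ∈ F then Cᶜ else Set.univ) s) = 1 := by
    intro s hs
    simp only [Finset.mem_sdiff] at hs
    have hs' : s ∉ S := fun h => hs.2 (hSF h)
    simp [hs', hs.2]
  rw [← Finset.prod_subset (Finset.subset_univ F)]
  · rw [← Finset.prod_sdiff hSF]
    have e1 : ∀ s ∈ S, (if s ∈ S then μ C else if s ∈ F then μ Cᶜ else 1) = μ C := by
      intro s hs; simp [hs]
    have : (∏ s ∈ F \ S, μ (if s ∈ S then C else if s ∈ F then Cᶜ else Set.univ))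
        = μ Cᶜ ^ (F \ S).card := by
      rw [Finset.prod_congr rfl, Finset.prod_const]
      intro s hs
      simp only [Finset.mem_sdiff] at hs
      simp [hs.1, hs.2]
    rw [this]
    have : (∏ s ∈ S, μ (if s ∈ S then C else if s ∈ F then Cᶜ else Set.univ))
        = μ C ^ S.card := by
      rw [Finset.prod_congr rfl, Finset.prod_const]
      intro s hs; simp [hs]
    rw [this, Finset.card_sdiff_of_subset hSF, mul_comm]
  · intro s _ hs
    have hs' : s ∉ S := fun h => hs (hSF h)
    simp [hs', hs]


lemma aux_An_meas {E : Type*} [MeasurableSpace E] (T t n : ℕ) (C : Set E) (hC : MeasurableSet C) :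
    MeasurableSet {ω : Fin (T+1) → E | {s : Fin (T+1) | (s:ℕ) < t ∧ ω s ∈ C}.ncard = n} := by
  rw [aux_An_eq]
  refine MeasurableSet.biUnion (Set.to_countable _) (fun S _ => aux_fiber_meas T C hC _ S)

lemma aux_An_measure {E : Type*} [MeasurableSpace E] (μ : Measure E) [IsProbabilityMeasure μ]
    (T t n : ℕ) (ht : t ≤ T + 1) (C : Set E) (hC : MeasurableSet C) :
    (Measure.pi fun _ : Fin (T + 1) => μ)
      {ω : Fin (T+1) → E | {s : Fin (T+1) | (s:ℕ) < t ∧ ω s ∈ C}.ncard = n}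
    = (t.choose n) * μ C ^ n * μ Cᶜ ^ (t - n) := by
  set F := Finset.univ.filter (fun s : Fin (T+1) => (s:ℕ) < t) with hFdef
  rw [aux_An_eq]
  rw [measure_biUnion_finset]
  · have : ∀ S ∈ F.powersetCard n,
        (Measure.pi fun _ : Fin (T + 1) => μ) {ω | ∀ s ∈ F, (ω s ∈ C ↔ s ∈ S)}
        = μ C ^ n * μ Cᶜ ^ (t - n) := by
      intro S hS
      rw [Finset.mem_powersetCard] at hS
      rw [aux_fiber_measure μ T C hC F S hS.1, hS.2, aux_cardF T t ht]
    rw [Finset.sum_congr rfl this, Finset.sum_const, Finset.card_powersetCard,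
      aux_cardF T t ht, nsmul_eq_mul, mul_assoc]
  · intro S hS S' hS' hne
    simp only [Function.onFun]
    rw [Set.disjoint_left]
    intro ω h1 h2
    simp only [Set.mem_setOf_eq] at h1 h2
    apply hne
    simp only [Finset.mem_coe, Finset.mem_powersetCard] at hS hS'
    ext s
    constructor
    · intro h; exact (h2 s (hS.1 h)).1 ((h1 s (hS.1 h)).2 h)
    · intro h; exact (h1 s (hS'.1 h)).1 ((h2 s (hS'.1 h)).2 h)
  · exact fun S _ => aux_fiber_meas T C hC F S
lemma aux_step {E : Type*} [MeasurableSpace E] (μ : Measure E) [IsProbabilityMeasure μ]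
    (T t : ℕ) (ht : t ≤ T + 1) (C : Set E) (hC : MeasurableSet C)
    (Y : (Fin (T+1) → E) → ℝ≥0∞)
    (h : ∀ n : ℕ, ∫⁻ ω in {ω : Fin (T + 1) → E | {s : Fin (T + 1) | (s : ℕ) < t ∧ ω s ∈ C}.ncard = n},
          Y ω ∂(Measure.pi fun _ : Fin (T + 1) => μ)
        ≤ (2 / ((n : ℝ≥0∞) + 1)) * μ C *
            (Measure.pi fun _ : Fin (T + 1) => μ)
              {ω : Fin (T + 1) → E | {s : Fin (T + 1) | (s : ℕ) < t ∧ ω s ∈ C}.ncard = n}) :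
    ∫⁻ ω, Y ω ∂(Measure.pi fun _ : Fin (T + 1) => μ) ≤ 2 / ((t : ℝ≥0∞) + 1) := by
  set P := Measure.pi fun _ : Fin (T + 1) => μ with hP
  set A : ℕ → Set (Fin (T+1) → E) :=
    fun n => {ω | {s : Fin (T + 1) | (s : ℕ) < t ∧ ω s ∈ C}.ncard = n} with hA
  have hAmeas : ∀ n, MeasurableSet (A n) := fun n => aux_An_meas T t n C hC
  have hAdisj : Pairwise (Function.onFun Disjoint A) := by
    intro m n hmn
    simp only [Function.onFun, Set.disjoint_left]
    intro ω h1 h2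
    simp only [hA, Set.mem_setOf_eq] at h1 h2
    exact hmn (h1.symm.trans h2)
  have hcover : ⋃ n, A n = Set.univ := by
    ext ω; simp [hA]
  have hdecomp : ∫⁻ ω, Y ω ∂P = ∑' n, ∫⁻ ω in A n, Y ω ∂P := by
    conv_lhs => rw [← Measure.restrict_univ (μ := P), ← hcover,
      Measure.restrict_iUnion hAdisj hAmeas, lintegral_sum_measure]
  rw [hdecomp]
  refine le_trans (ENNReal.tsum_le_tsum h) ?_
  set p := μ C with hp
  set q := μ Cᶜ with hq
  have hPA : ∀ n, P (A n) = (t.choose n) * p ^ n * q ^ (t - n) :=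
    fun n => aux_An_measure μ T t n ht C hC
  have hzero : ∀ n ∉ Finset.range (t+1), (2 / ((n : ℝ≥0∞) + 1)) * p * P (A n) = 0 := by
    intro n hn
    rw [Finset.mem_range, not_lt] at hn
    rw [hPA n, Nat.choose_eq_zero_of_lt (by omega)]
    simp
  rw [tsum_eq_sum hzero]
  have htne : ((t : ℝ≥0∞) + 1) ≠ 0 := by simp
  have htnt : ((t : ℝ≥0∞) + 1) ≠ ⊤ := by
    simp [ENNReal.add_ne_top]
  rw [ENNReal.le_div_iff_mul_le (Or.inl htne) (Or.inl htnt), Finset.sum_mul]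
  have hterm : ∀ n ∈ Finset.range (t+1),
      (2 / ((n : ℝ≥0∞) + 1)) * p * P (A n) * ((t : ℝ≥0∞) + 1)
      = 2 * (p ^ (n+1) * q ^ (t + 1 - (n+1)) * (((t+1).choose (n+1) : ℕ) : ℝ≥0∞)) := by
    intro n hn
    have hnne : ((n : ℝ≥0∞) + 1) ≠ 0 := by simp
    have hnnt : ((n : ℝ≥0∞) + 1) ≠ ⊤ := by simp [ENNReal.add_ne_top]
    have hc : ((t:ℝ≥0∞)+1) * (t.choose n : ℕ) = (((t+1).choose (n+1) : ℕ) : ℝ≥0∞) * ((n:ℝ≥0∞)+1) := by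
      have hN : (t+1) * t.choose n = (t+1).choose (n+1) * (n+1) := Nat.add_one_mul_choose_eq t n
      exact_mod_cast congrArg (fun k : ℕ => (k : ℝ≥0∞)) hN
    rw [hPA n]
    calc (2 / ((n : ℝ≥0∞) + 1)) * p * ((t.choose n : ℕ) * p^n * q^(t-n)) * ((t:ℝ≥0∞)+1)
        = (((t:ℝ≥0∞)+1) * (t.choose n : ℕ)) * (((n:ℝ≥0∞)+1)⁻¹ * (2 * (p * p^n * q^(t-n)))) := by
          rw [div_eq_mul_inv]; ring
      _ = ((((t+1).choose (n+1) : ℕ) : ℝ≥0∞) * ((n:ℝ≥0∞)+1)) * (((n:ℝ≥0∞)+1)⁻¹ * (2 * (p * p^n * q^(t-n)))) := by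
          rw [hc]
      _ = (((n:ℝ≥0∞)+1) * ((n:ℝ≥0∞)+1)⁻¹) * ((((t+1).choose (n+1) : ℕ) : ℝ≥0∞) * (2 * (p * p^n * q^(t-n)))) := by
          ring
      _ = 2 * (p ^ (n+1) * q ^ (t + 1 - (n+1)) * (((t+1).choose (n+1) : ℕ) : ℝ≥0∞)) := by
          rw [ENNReal.mul_inv_cancel hnne hnnt, one_mul, pow_succ]
          have : t + 1 - (n+1) = t - n := by omega
          rw [this]; ring
  rw [Finset.sum_congr rfl hterm, ← Finset.mul_sum]
  have hbinom : ∑ k ∈ Finset.range (t+2), p ^ k * q ^ (t+1-k) * (((t+1).choose k : ℕ) : ℝ≥0∞) = 1 := by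
    rw [← add_pow p q (t+1)]
    have hpq : p + q = 1 := by
      rw [hp, hq, measure_add_measure_compl hC, measure_univ]
    rw [hpq, one_pow]
  calc 2 * ∑ n ∈ Finset.range (t+1), p ^ (n+1) * q ^ (t+1-(n+1)) * (((t+1).choose (n+1) : ℕ) : ℝ≥0∞)
      ≤ 2 * ∑ k ∈ Finset.range (t+2), p ^ k * q ^ (t+1-k) * (((t+1).choose k : ℕ) : ℝ≥0∞) := by
        gcongr
        rw [Finset.sum_range_succ' (fun k => p ^ k * q ^ (t+1-k) * (((t+1).choose k : ℕ) : ℝ≥0∞)) (t+1)]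
        exact le_add_right le_rfl
    _ = 2 := by rw [hbinom, mul_one]
lemma aux_harm : ∀ T : ℕ, ∑ t ∈ Finset.Icc 1 T, 1 / ((t : ℝ) + 1) ≤ Real.log ((T : ℝ) + 1) := by
  intro T
  induction T with
  | zero => simp
  | succ T ih =>
    rw [Finset.sum_Icc_succ_top (by omega : 1 ≤ T + 1)]
    have h1 : (0:ℝ) < (T:ℝ) + 1 := by positivity
    have h2 : (0:ℝ) < (T:ℝ) + 2 := by positivity
    have hlog := Real.log_le_sub_one_of_pos (show (0:ℝ) < ((T:ℝ)+1)/((T:ℝ)+2) by positivity)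
    rw [Real.log_div (by linarith) (by linarith)] at hlog
    have harith : ((T:ℝ)+1)/((T:ℝ)+2) - 1 = -(1/((T:ℝ)+2)) := by
      field_simp; norm_num
    rw [harith] at hlog
    have hc : ((T+1:ℕ):ℝ) = (T:ℝ)+1 := by push_cast; ring
    rw [hc]
    have hgoal2 : (T:ℝ)+1+1 = (T:ℝ)+2 := by ring
    rw [hgoal2]
    linarith


/-- Queries are i.i.d. with law μ on a space partitioned into cells C_1,...,C_N with
μ(C_i) > 0; n_i(t) is the number of the first t queries landing in C_i (so n_i(t) is binomial
with parameters t and μ(C_i)). If the quantities Y i t (representing μ(C_i \ Ĉ_{i,t}))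
satisfy the conditional bound E[Y i t | n_i(t) = n] ≤ (2/(n+1))·μ(C_i), then
∑_{t=1}^T ∑_i E[Y i t] ≤ 2·N·log(T+1). -/
theorem stmt_18 {E : Type*} [MeasurableSpace E] (μ : Measure E) [IsProbabilityMeasure μ]
    (N T : ℕ) (C : Fin N → Set E) (hCm : ∀ i, MeasurableSet (C i))
    (hdisj : Pairwise fun i j => Disjoint (C i) (C j)) (hcover : ⋃ i, C i = Set.univ)
    (hpos : ∀ i, 0 < μ (C i))
    (Y : Fin N → ℕ → (Fin (T + 1) → E) → ℝ≥0∞)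
    (hcond : ∀ i : Fin N, ∀ t ∈ Finset.Icc 1 T, ∀ n : ℕ,
      ∫⁻ ω in {ω : Fin (T + 1) → E | {s : Fin (T + 1) | (s : ℕ) < t ∧ ω s ∈ C i}.ncard = n},
          Y i t ω ∂(Measure.pi fun _ : Fin (T + 1) => μ)
        ≤ (2 / ((n : ℝ≥0∞) + 1)) * μ (C i) *
            (Measure.pi fun _ : Fin (T + 1) => μ)
              {ω : Fin (T + 1) → E | {s : Fin (T + 1) | (s : ℕ) < t ∧ ω s ∈ C i}.ncard = n}) :
    ∑ t ∈ Finset.Icc 1 T, ∑ i : Fin N,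
        ∫⁻ ω, Y i t ω ∂(Measure.pi fun _ : Fin (T + 1) => μ)
      ≤ ENNReal.ofReal (2 * (N : ℝ) * Real.log ((T : ℝ) + 1)) := by
  have key : ∀ t ∈ Finset.Icc 1 T, ∀ i : Fin N,
      ∫⁻ ω, Y i t ω ∂(Measure.pi fun _ : Fin (T + 1) => μ) ≤ 2 / ((t : ℝ≥0∞) + 1) := by
    intro t ht i
    have ht' : t ≤ T + 1 := by
      rw [Finset.mem_Icc] at ht; omega
    exact aux_step μ T t ht' (C i) (hCm i) (Y i t) (hcond i t ht)
  have hterm : ∀ t : ℕ, (N : ℝ≥0∞) * (2 / ((t : ℝ≥0∞) + 1))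
      = ENNReal.ofReal ((N:ℝ) * (2 / ((t:ℝ)+1))) := by
    intro t
    rw [ENNReal.ofReal_mul (by positivity), ENNReal.ofReal_div_of_pos (by positivity)]
    congr 1
    · exact (ENNReal.ofReal_natCast N).symm
    congr 1
    · norm_num
    · rw [ENNReal.ofReal_add (by positivity) (by norm_num), ENNReal.ofReal_natCast,
        ENNReal.ofReal_one]
  calc ∑ t ∈ Finset.Icc 1 T, ∑ i : Fin N,
        ∫⁻ ω, Y i t ω ∂(Measure.pi fun _ : Fin (T + 1) => μ)
      ≤ ∑ t ∈ Finset.Icc 1 T, ∑ _i : Fin N, (2 / ((t : ℝ≥0∞) + 1)) :=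
        Finset.sum_le_sum fun t ht => Finset.sum_le_sum fun i _ => key t ht i
    _ = ∑ t ∈ Finset.Icc 1 T, (N : ℝ≥0∞) * (2 / ((t : ℝ≥0∞) + 1)) := by
        simp [Finset.sum_const, nsmul_eq_mul]
    _ = ENNReal.ofReal (∑ t ∈ Finset.Icc 1 T, (N:ℝ) * (2 / ((t:ℝ)+1))) := by
        rw [Finset.sum_congr rfl fun t _ => hterm t,
          ← ENNReal.ofReal_sum_of_nonneg (fun t _ => by positivity)]
    _ ≤ ENNReal.ofReal (2 * (N : ℝ) * Real.log ((T : ℝ) + 1)) := by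
        apply ENNReal.ofReal_le_ofReal
        have := aux_harm T
        have hsum : ∑ t ∈ Finset.Icc 1 T, (N:ℝ) * (2 / ((t:ℝ)+1))
            = 2 * (N:ℝ) * ∑ t ∈ Finset.Icc 1 T, 1 / ((t:ℝ)+1) := by
          rw [Finset.mul_sum]
          refine Finset.sum_congr rfl fun t _ => ?_
          ring
        rw [hsum]
        have hN : (0:ℝ) ≤ 2 * (N:ℝ) := by positivity
        nlinarith [Finset.sum_nonneg (fun t (_ : t ∈ Finset.Icc 1 T) =>
          by positivity : ∀ t ∈ Finset.Icc 1 T, (0:ℝ) ≤ 1 / ((t:ℝ)+1))]
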